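/- Let b ∈ ℕ, B = {k/b : k = 0,1,...,b} ∩ [0,1] (images of Q_{1/b} on [0,1]), m₀ ∈ ℕ, and let T ⊆ B^m be a finite pairwise ε-separated set of vectors. Fix x ∈ {1,...,m}^{m₀} and any map A from samples to functions. Then Σ_{v∈T} ℓ₁(A(sam(x,f_v)), f_v) ≥ (ε/2)·(|T| − (b+1)^{m₀}). -/

import Mathlib

open scoped Classical in
theorem stmt15 (m m₀ b : ℕ) (hm : 0 < m) (hb : 0 < b) (ε : ℝ) (hε : 0 < ε)
    (T : Finset (Fin m → ℝ))
    (hB : ∀ v ∈ T, ∀ i, ∃ k : ℕ, k ≤ b ∧ v i = (k : ℝ) / b)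
    (hsep : ∀ v ∈ T, ∀ w ∈ T, v ≠ w → (1 / (m : ℝ)) * ∑ i, |v i - w i| > ε)
    (A : (Fin m₀ → (Fin m) × ℝ) → (Fin m → ℝ)) (x : Fin m₀ → Fin m) :
    ∑ v ∈ T, (1 / (m : ℝ)) * ∑ i, |A (fun j => (x j, v (x j))) i - v i| ≥
      (ε / 2) * ((T.card : ℝ) - ((b : ℝ) + 1) ^ m₀) := by
  set L : (Fin m → ℝ) → ℝ :=
    fun v => (1 / (m : ℝ)) * ∑ i, |A (fun j => (x j, v (x j))) i - v i| with hL
  have hLnonneg : ∀ v, 0 ≤ L v := by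
    intro v
    apply mul_nonneg (by positivity)
    exact Finset.sum_nonneg fun i _ => abs_nonneg _
  set S : Finset (Fin m → ℝ) := T.filter (fun v => L v < ε / 2) with hS
  -- key: if two elements of S have the same sample, they're equal
  have hkey : ∀ v ∈ S, ∀ w ∈ S, (∀ j, v (x j) = w (x j)) → v = w := by
    intro v hv w hw hvw
    by_contra hne
    have hvT := (Finset.mem_filter.1 hv).1
    have hwT := (Finset.mem_filter.1 hw).1
    have hvL := (Finset.mem_filter.1 hv).2
    have hwL := (Finset.mem_filter.1 hw).2
    have hsame : (fun j => (x j, v (x j))) = (fun j => (x j, w (x j))) := by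
      funext j; rw [hvw j]
    have htri : (1 / (m : ℝ)) * ∑ i, |v i - w i| ≤ L v + L w := by
      rw [hL]
      simp only
      rw [hsame, ← mul_add, ← Finset.sum_add_distrib]
      apply mul_le_mul_of_nonneg_left _ (by positivity)
      apply Finset.sum_le_sum
      intro i _
      calc |v i - w i| = |(A (fun j => (x j, w (x j))) i - w i) - (A (fun j => (x j, w (x j))) i - v i)| := by ring_nf
        _ ≤ |A (fun j => (x j, w (x j))) i - v i| + |A (fun j => (x j, w (x j))) i - w i| := by
            rw [abs_sub_comm]; exact abs_sub _ _
    have := hsep v hvT w hwT hne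
    linarith
  -- injection from S into patterns
  have hcardS : (S.card : ℝ) ≤ ((b : ℝ) + 1) ^ m₀ := by
    have hinj : Set.InjOn (fun v : Fin m → ℝ => fun j : Fin m₀ =>
        (⟨⌊(b : ℝ) * v (x j)⌋₊ % (b + 1), Nat.mod_lt _ (Nat.succ_pos b)⟩ : Fin (b + 1)))
        (S : Set (Fin m → ℝ)) := by
      intro v hv w hw h
      apply hkey v hv w hw
      intro j
      obtain ⟨k, hk, hvk⟩ := hB v (Finset.mem_filter.1 hv).1 (x j)
      obtain ⟨l, hl, hwl⟩ := hB w (Finset.mem_filter.1 hw).1 (x j)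
      have hbne : (b : ℝ) ≠ 0 := Nat.cast_ne_zero.2 hb.ne'
      have hvfloor : ⌊(b : ℝ) * v (x j)⌋₊ = k := by
        rw [hvk, mul_div_cancel₀ _ hbne, Nat.floor_natCast]
      have hwfloor : ⌊(b : ℝ) * w (x j)⌋₊ = l := by
        rw [hwl, mul_div_cancel₀ _ hbne, Nat.floor_natCast]
      have := congrFun h j
      simp only [Fin.mk.injEq, hvfloor, hwfloor] at this
      rw [Nat.mod_eq_of_lt (Nat.lt_succ_of_le hk), Nat.mod_eq_of_lt (Nat.lt_succ_of_le hl)] at this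
      rw [hvk, hwl, this]
    have := Finset.card_le_card_of_injOn _ (fun v _ => Finset.mem_univ _) hinj
    calc (S.card : ℝ) ≤ ((Finset.univ : Finset (Fin m₀ → Fin (b + 1))).card : ℝ) := by
          exact_mod_cast this
      _ = ((b : ℝ) + 1) ^ m₀ := by
          simp [Finset.card_univ]
  have hsplit : ∑ v ∈ T, L v ≥ ∑ v ∈ T \ S, L v := by
    apply Finset.sum_le_sum_of_subset_of_nonneg (Finset.sdiff_subset)
    intro v _ _; exact hLnonneg v
  have hlb : ∑ v ∈ T \ S, L v ≥ (ε / 2) * ((T \ S).card : ℝ) := by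
    calc ∑ v ∈ T \ S, L v ≥ ∑ _v ∈ T \ S, (ε / 2) := by
          apply Finset.sum_le_sum
          intro v hv
          have hvT := (Finset.mem_sdiff.1 hv).1
          have hvS := (Finset.mem_sdiff.1 hv).2
          by_contra hlt
          exact hvS (Finset.mem_filter.2 ⟨hvT, by linarith⟩)
      _ = (ε / 2) * ((T \ S).card : ℝ) := by
          rw [Finset.sum_const, nsmul_eq_mul, mul_comm]
  have hcard : ((T \ S).card : ℝ) ≥ (T.card : ℝ) - ((b : ℝ) + 1) ^ m₀ := by
    have : (T \ S).card = T.card - S.card :=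
      Finset.card_sdiff_of_subset (Finset.filter_subset _ _)
    have hSle : S.card ≤ T.card := Finset.card_le_card (Finset.filter_subset _ _)
    have : ((T \ S).card : ℝ) = (T.card : ℝ) - (S.card : ℝ) := by
      rw [this, Nat.cast_sub hSle]
    linarith
  calc ∑ v ∈ T, L v ≥ ∑ v ∈ T \ S, L v := hsplit
    _ ≥ (ε / 2) * ((T \ S).card : ℝ) := hlb
    _ ≥ (ε / 2) * ((T.card : ℝ) - ((b : ℝ) + 1) ^ m₀) := by
        apply mul_le_mul_of_nonneg_left hcard (by positivity)
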